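/- Let H be a stabilizer matrix on n qubits (n ≥ 1), let p ∈ [0,1], and let D be any decoder for the quantum erasure channel of probability p. Then the decoding error probability satisfies P_err ≥ (2np − rank(H) + E_p[rank(H_Ē) − rank(H_E)] − 1) / (2n). -/

import Mathlib

open Finset Matrix

/-- The symplectic form on `F₂^(Fin n × Fin 2)`. -/
def sympl {n : ℕ} (u v : Fin n × Fin 2 → ZMod 2) : ZMod 2 :=
  ∑ i : Fin n, (u (i, 0) * v (i, 1) + u (i, 1) * v (i, 0))

/-- A stabilizer matrix: rows are pairwise orthogonal for the symplectic form. -/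
def IsStabilizerMatrix {ρ : Type*} {n : ℕ} (H : Matrix ρ (Fin n × Fin 2) (ZMod 2)) : Prop :=
  ∀ a b : ρ, sympl (H a) (H b) = 0

/-- The support of a Pauli error. -/
def psupp {n : ℕ} (w : Fin n × Fin 2 → ZMod 2) : Finset (Fin n) :=
  Finset.univ.filter fun i => ¬(w (i, 0) = 0 ∧ w (i, 1) = 0)

/-- The syndrome of a Pauli error. -/
def syndrome {ρ : Type*} {n : ℕ} (H : Matrix ρ (Fin n × Fin 2) (ZMod 2))
    (w : Fin n × Fin 2 → ZMod 2) : ρ → ZMod 2 :=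
  fun a => sympl (H a) w

/-- The row space `S` of a stabilizer matrix. -/
def rowSpace {ρ : Type*} {n : ℕ} (H : Matrix ρ (Fin n × Fin 2) (ZMod 2)) :
    Submodule (ZMod 2) (Fin n × Fin 2 → ZMod 2) :=
  Submodule.span (ZMod 2) (Set.range fun a => H a)

/-- The matrix `H_E`: columns outside the erasure `E` are replaced by zero
(this does not change the rank, so `(erased H E).rank` is the rank of the submatrix
of erased columns). -/
def erased {ρ : Type*} {n : ℕ} (H : Matrix ρ (Fin n × Fin 2) (ZMod 2)) (E : Finset (Fin n)) :
    Matrix ρ (Fin n × Fin 2) (ZMod 2) :=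
  Matrix.of fun a p => if p.1 ∈ E then H a p else 0

/-- The decoding error probability of a decoder `D` over the quantum erasure channel
of probability `p`. -/
noncomputable def errProb {ρ : Type*} [Fintype ρ] {n : ℕ}
    (H : Matrix ρ (Fin n × Fin 2) (ZMod 2)) (p : ℝ)
    (D : Finset (Fin n) → (ρ → ZMod 2) → ((Fin n × Fin 2 → ZMod 2) ⧸ rowSpace H)) : ℝ :=
  ∑ E : Finset (Fin n), p ^ E.card * (1 - p) ^ (n - E.card) *
    ((Nat.card {w : Fin n × Fin 2 → ZMod 2 |
        psupp w ⊆ E ∧ D E (syndrome H w) ≠ Submodule.Quotient.mk w} : ℝ) / 4 ^ E.card)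

/-- `E_p[rank(H_Ē) − rank(H_E)]`. -/
noncomputable def rankDiffExp {ρ : Type*} [Fintype ρ] {n : ℕ}
    (H : Matrix ρ (Fin n × Fin 2) (ZMod 2)) (p : ℝ) : ℝ :=
  ∑ E : Finset (Fin n), p ^ E.card * (1 - p) ^ (n - E.card) *
    (((erased H Eᶜ).rank : ℝ) - ((erased H E).rank : ℝ))


lemma sum_weights {α : Type*} [DecidableEq α] (s : Finset α) (p : ℝ) :
    ∑ t ∈ s.powerset, p ^ t.card * (1 - p) ^ (s.card - t.card) = 1 := by
  have h := Finset.prod_add (fun _ : α => p) (fun _ : α => 1 - p) s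
  simp only [Finset.prod_const] at h
  have hps : p + (1 - p) = 1 := by ring
  rw [hps, one_pow] at h
  rw [Finset.sum_congr rfl fun t ht =>
    (by rw [Finset.card_sdiff_of_subset (Finset.mem_powerset.mp ht)] :
      p ^ t.card * (1 - p) ^ (s \ t).card = p ^ t.card * (1 - p) ^ (s.card - t.card))] at h
  exact h.symm

lemma sum_weights_univ (n : ℕ) (p : ℝ) :
    ∑ E : Finset (Fin n), p ^ E.card * (1 - p) ^ (n - E.card) = 1 := by
  have := sum_weights (Finset.univ : Finset (Fin n)) p
  simpa [Finset.powerset_univ, Finset.card_univ] using this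

lemma sum_weights_mem (n : ℕ) (p : ℝ) (i : Fin n) :
    ∑ E : Finset (Fin n), (if i ∈ E then p ^ E.card * (1 - p) ^ (n - E.card) else 0) = p := by
  classical
  rw [← Finset.sum_filter]
  have key : ∑ E ∈ Finset.univ.filter (fun E : Finset (Fin n) => i ∈ E),
      p ^ E.card * (1 - p) ^ (n - E.card)
      = ∑ F ∈ ((Finset.univ : Finset (Fin n)).erase i).powerset,
        p ^ (F.card + 1) * (1 - p) ^ ((n - 1) - F.card) := by
    refine Finset.sum_bij' (fun E _ => E.erase i) (fun F _ => insert i F) ?_ ?_ ?_ ?_ ?_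
    · intro E hE
      simp only [Finset.mem_filter, Finset.mem_univ, true_and] at hE
      rw [Finset.mem_powerset]
      exact Finset.erase_subset_erase i (Finset.subset_univ E)
    · intro F hF
      simp only [Finset.mem_powerset] at hF
      simp only [Finset.mem_filter, Finset.mem_univ, true_and]
      exact Finset.mem_insert_self i F
    · intro E hE
      simp only [Finset.mem_filter, Finset.mem_univ, true_and] at hE
      exact Finset.insert_erase hE
    · intro F hF
      simp only [Finset.mem_powerset] at hF
      refine Finset.erase_insert fun hi => ?_
      exact (Finset.notMem_erase i Finset.univ) (hF hi)
    · intro E hE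
      simp only [Finset.mem_filter, Finset.mem_univ, true_and] at hE
      have h1 : (E.erase i).card + 1 = E.card := by
        rw [Finset.card_erase_of_mem hE]
        have : 1 ≤ E.card := Finset.card_pos.mpr ⟨i, hE⟩
        omega
      have h2 : (n - 1) - (E.erase i).card = n - E.card := by
        have hcle : E.card ≤ n := by
          simpa using Finset.card_le_card (Finset.subset_univ E)
        omega
      rw [h1, h2]
  rw [key]
  have hcard : ((Finset.univ : Finset (Fin n)).erase i).card = n - 1 := by
    rw [Finset.card_erase_of_mem (Finset.mem_univ i), Finset.card_univ, Fintype.card_fin]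
  have := sum_weights ((Finset.univ : Finset (Fin n)).erase i) p
  rw [hcard] at this
  calc ∑ F ∈ ((Finset.univ : Finset (Fin n)).erase i).powerset,
        p ^ (F.card + 1) * (1 - p) ^ ((n - 1) - F.card)
      = p * ∑ F ∈ ((Finset.univ : Finset (Fin n)).erase i).powerset,
        p ^ F.card * (1 - p) ^ ((n - 1) - F.card) := by
        rw [Finset.mul_sum]; exact Finset.sum_congr rfl fun F _ => by ring
    _ = p := by rw [this, mul_one]

lemma sum_weights_mul_card (n : ℕ) (p : ℝ) :
    ∑ E : Finset (Fin n), p ^ E.card * (1 - p) ^ (n - E.card) * E.card = n * p := by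
  classical
  have step : ∀ E : Finset (Fin n), p ^ E.card * (1 - p) ^ (n - E.card) * E.card
      = ∑ i : Fin n, (if i ∈ E then p ^ E.card * (1 - p) ^ (n - E.card) else 0) := by
    intro E
    rw [Finset.sum_ite, Finset.sum_const, Finset.sum_const_zero, add_zero,
      Finset.filter_univ_mem, nsmul_eq_mul, mul_comm]
  rw [Finset.sum_congr rfl fun E _ => step E, Finset.sum_comm]
  rw [Finset.sum_congr rfl fun i _ => sum_weights_mem n p i]
  simp [Finset.card_univ, mul_comm]

-- support characterization
lemma psupp_subset_iff {n : ℕ} (w : Fin n × Fin 2 → ZMod 2) (E : Finset (Fin n)) :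
    psupp w ⊆ E ↔ ∀ p : Fin n × Fin 2, p.1 ∉ E → w p = 0 := by
  constructor
  · intro h p hp
    by_contra hw
    apply hp
    apply h
    simp only [psupp, Finset.mem_filter, Finset.mem_univ, true_and]
    intro ⟨h0, h1⟩
    obtain ⟨i, j⟩ := p
    fin_cases j
    · exact hw h0
    · exact hw h1
  · intro h i hi
    simp only [psupp, Finset.mem_filter, Finset.mem_univ, true_and] at hi
    by_contra hiE
    exact hi ⟨h (i, 0) hiE, h (i, 1) hiE⟩

-- cardinality of the set of errors supported in E
lemma card_supp_subset {n : ℕ} (E : Finset (Fin n)) :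
    Nat.card {w : Fin n × Fin 2 → ZMod 2 | psupp w ⊆ E} = 4 ^ E.card := by
  classical
  have e : {w : Fin n × Fin 2 → ZMod 2 | psupp w ⊆ E} ≃
      ({p : Fin n × Fin 2 // p.1 ∈ E} → ZMod 2) :=
    { toFun := fun w p => w.1 p.1
      invFun := fun g => ⟨fun p => if h : p.1 ∈ E then g ⟨p, h⟩ else 0, by
        rw [Set.mem_setOf_eq, psupp_subset_iff]
        intro p hp
        simp [hp]⟩
      left_inv := fun w => by
        refine Subtype.ext (funext fun p => ?_)
        by_cases h : p.1 ∈ E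
        · simp [h]
        · simp only [h, dif_neg, not_false_iff]
          exact ((psupp_subset_iff _ _).1 w.2 p h).symm
      right_inv := fun g => by
        funext p
        simp [p.2] }
  rw [Nat.card_congr e, Nat.card_fun]
  have hsub : Nat.card {p : Fin n × Fin 2 // p.1 ∈ E} = E.card * 2 := by
    rw [Nat.card_eq_fintype_card, Fintype.card_subtype]
    have : (Finset.univ.filter fun p : Fin n × Fin 2 => p.1 ∈ E) = E ×ˢ Finset.univ := by
      ext p; simp [Finset.mem_product]
    rw [this, Finset.card_product, Finset.card_univ, Fintype.card_fin]
  rw [hsub, Nat.card_eq_fintype_card, ZMod.card]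
  rw [mul_comm, pow_mul]
  norm_num

-- syndrome as mulVec for errors supported in E
lemma syndrome_eq_mulVec {r n : ℕ} (H : Matrix (Fin r) (Fin n × Fin 2) (ZMod 2))
    (E : Finset (Fin n)) (w : Fin n × Fin 2 → ZMod 2) (hw : psupp w ⊆ E) :
    syndrome H w = (erased H E).mulVec (fun p => w (p.1, p.2 + 1)) := by
  rw [psupp_subset_iff] at hw
  funext a
  show sympl (H a) w = Finset.univ.sum fun p => erased H E a p * w (p.1, p.2 + 1)
  rw [sympl, Fintype.sum_prod_type]
  refine Finset.sum_congr rfl fun i _ => ?_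
  rw [Fin.sum_univ_two]
  have h01 : ((0 : Fin 2) + 1) = 1 := rfl
  have h10 : ((1 : Fin 2) + 1) = 0 := rfl
  by_cases h : i ∈ E
  · simp [erased, h, h01, h10, add_comm]
  · simp [erased, h, hw (i, 0) h, hw (i, 1) h]

-- vecMul through erased
lemma vecMul_erased {r n : ℕ} (H : Matrix (Fin r) (Fin n × Fin 2) (ZMod 2))
    (E : Finset (Fin n)) (x : Fin r → ZMod 2) (p : Fin n × Fin 2) :
    (x ᵥ* erased H E) p = if p.1 ∈ E then (x ᵥ* H) p else 0 := by
  by_cases h : p.1 ∈ E <;>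
    simp [Matrix.vecMul, dotProduct, erased, h]

-- cardinality of submodules over F2
lemma card_submodule {m : Type*} [Fintype m] (W : Submodule (ZMod 2) (m → ZMod 2)) :
    Nat.card W = 2 ^ Module.finrank (ZMod 2) W := by
  have : Fintype W := Fintype.ofFinite W
  rw [Nat.card_eq_fintype_card, Module.card_eq_pow_finrank (K := ZMod 2), ZMod.card]

lemma rank_vecMulLinear {r n : ℕ} (M : Matrix (Fin r) (Fin n × Fin 2) (ZMod 2)) :
    Module.finrank (ZMod 2) (LinearMap.range M.vecMulLinear) = M.rank := by
  have h : M.vecMulLinear = Mᵀ.mulVecLin := (Matrix.mulVecLin_transpose M).symm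
  rw [h, ← Matrix.rank, Matrix.rank_transpose]

set_option synthInstance.maxHeartbeats 1000000 in
lemma finrank_inter {r n : ℕ} (H : Matrix (Fin r) (Fin n × Fin 2) (ZMod 2)) (E : Finset (Fin n)) :
    Module.finrank (ZMod 2)
        ((LinearMap.ker (erased H Eᶜ).vecMulLinear).map H.vecMulLinear)
      + (erased H Eᶜ).rank = H.rank := by
  set K := LinearMap.ker (erased H Eᶜ).vecMulLinear with hK
  set L := H.vecMulLinear with hL
  have hKL : LinearMap.ker L ≤ K := by
    intro x hx
    rw [LinearMap.mem_ker] at hx ⊢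
    funext p
    rw [Matrix.vecMulLinear_apply, vecMul_erased]
    split
    · rw [show x ᵥ* H = 0 from by rw [← Matrix.vecMulLinear_apply, hx]]
    · rfl
  have h1 := LinearMap.finrank_range_add_finrank_ker (L.domRestrict K)
  rw [LinearMap.range_domRestrict, LinearMap.ker_domRestrict] at h1
  have hker : Module.finrank (ZMod 2) (Submodule.comap K.subtype (LinearMap.ker L))
      = Module.finrank (ZMod 2) (LinearMap.ker L) :=
    (Submodule.comapSubtypeEquivOfLe hKL).finrank_eq
  rw [hker] at h1
  have h2 := LinearMap.finrank_range_add_finrank_ker L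
  have h3 := LinearMap.finrank_range_add_finrank_ker (erased H Eᶜ).vecMulLinear
  rw [rank_vecMulLinear] at h2 h3
  rw [Module.finrank_fintype_fun_eq_card, Fintype.card_fin] at h2 h3
  rw [← hK] at h3
  omega

lemma card_inter_le {r n : ℕ} (H : Matrix (Fin r) (Fin n × Fin 2) (ZMod 2)) (E : Finset (Fin n)) :
    Nat.card {v : Fin n × Fin 2 → ZMod 2 | v ∈ rowSpace H ∧ psupp v ⊆ E}
      ≤ 2 ^ Module.finrank (ZMod 2)
          ((LinearMap.ker (erased H Eᶜ).vecMulLinear).map H.vecMulLinear) := by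
  rw [← card_submodule]
  have hsub : {v : Fin n × Fin 2 → ZMod 2 | v ∈ rowSpace H ∧ psupp v ⊆ E}
      ⊆ ((LinearMap.ker (erased H Eᶜ).vecMulLinear).map H.vecMulLinear : Set _) := by
    rintro v ⟨hv, hsupp⟩
    have hv' : v ∈ LinearMap.range H.vecMulLinear := by
      rw [range_vecMulLinear]
      exact hv
    obtain ⟨x, hx⟩ := hv'
    rw [SetLike.mem_coe, Submodule.mem_map]
    refine ⟨x, ?_, hx⟩
    rw [LinearMap.mem_ker]
    funext p
    rw [Matrix.vecMulLinear_apply, vecMul_erased]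
    rw [psupp_subset_iff] at hsupp
    by_cases h : p.1 ∈ Eᶜ
    · rw [if_pos h, show x ᵥ* H = v from by rw [← Matrix.vecMulLinear_apply, hx]]
      exact hsupp p (Finset.mem_compl.mp h)
    · rw [if_neg h]
      rfl
  exact Nat.card_mono (Set.toFinite _) hsub

set_option synthInstance.maxHeartbeats 1000000 in
lemma card_correct_le {r n : ℕ} (H : Matrix (Fin r) (Fin n × Fin 2) (ZMod 2))
    (D : Finset (Fin n) → (Fin r → ZMod 2) → ((Fin n × Fin 2 → ZMod 2) ⧸ rowSpace H))
    (E : Finset (Fin n)) :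
    Nat.card {w : Fin n × Fin 2 → ZMod 2 |
        psupp w ⊆ E ∧ D E (syndrome H w) = Submodule.Quotient.mk w}
      ≤ 2 ^ (erased H E).rank * 2 ^ Module.finrank (ZMod 2)
          ((LinearMap.ker (erased H Eᶜ).vecMulLinear).map H.vecMulLinear) := by
  classical
  set C := {w : Fin n × Fin 2 → ZMod 2 |
      psupp w ⊆ E ∧ D E (syndrome H w) = Submodule.Quotient.mk w} with hC
  have hchoice : ∀ s : Fin r → ZMod 2, ∃ cs : Fin n × Fin 2 → ZMod 2,
      ((∃ w ∈ C, syndrome H w = s) → cs ∈ C ∧ syndrome H cs = s) := by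
    intro s
    by_cases h : ∃ w ∈ C, syndrome H w = s
    · obtain ⟨w, hw, hs⟩ := h
      exact ⟨w, fun _ => ⟨hw, hs⟩⟩
    · exact ⟨0, fun hh => absurd hh h⟩
  choose c hc using hchoice
  have key : ∀ w : C, c (syndrome H w.1) ∈ C ∧ syndrome H (c (syndrome H w.1)) = syndrome H w.1 :=
    fun w => hc _ ⟨w.1, w.2, rfl⟩
  let f : C → (LinearMap.range (erased H E).mulVecLin) ×
      {v : Fin n × Fin 2 → ZMod 2 | v ∈ rowSpace H ∧ psupp v ⊆ E} :=
    fun w => ⟨⟨syndrome H w.1, by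
      rw [LinearMap.mem_range]
      exact ⟨fun p => w.1 (p.1, p.2 + 1), (syndrome_eq_mulVec H E w.1 w.2.1).symm⟩⟩,
      ⟨w.1 - c (syndrome H w.1), by
        obtain ⟨hcC, hcs⟩ := key w
        constructor
        · rw [← Submodule.Quotient.eq]
          have h1 : D E (syndrome H w.1) = Submodule.Quotient.mk w.1 := w.2.2
          have h2 : D E (syndrome H (c (syndrome H w.1)))
              = Submodule.Quotient.mk (c (syndrome H w.1)) := hcC.2
          rw [hcs] at h2
          rw [← h1, ← h2]
        · rw [psupp_subset_iff]
          intro p hp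
          have e1 := (psupp_subset_iff _ _).1 w.2.1 p hp
          have e2 := (psupp_subset_iff _ _).1 hcC.1 p hp
          simp [e1, e2]⟩⟩
  have hf : Function.Injective f := by
    intro w w' h
    obtain ⟨h1, h2⟩ := Prod.mk.injEq .. ▸ h
    have hs : syndrome H w.1 = syndrome H w'.1 := congrArg Subtype.val h1
    have hd : w.1 - c (syndrome H w.1) = w'.1 - c (syndrome H w'.1) :=
      congrArg Subtype.val h2
    rw [hs] at hd
    exact Subtype.ext (sub_left_inj.mp hd)
  calc Nat.card C
      ≤ Nat.card ((LinearMap.range (erased H E).mulVecLin) ×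
          {v : Fin n × Fin 2 → ZMod 2 | v ∈ rowSpace H ∧ psupp v ⊆ E}) :=
        Nat.card_le_card_of_injective f hf
    _ = Nat.card (LinearMap.range (erased H E).mulVecLin) *
          Nat.card {v : Fin n × Fin 2 → ZMod 2 | v ∈ rowSpace H ∧ psupp v ⊆ E} :=
        Nat.card_prod _ _
    _ ≤ 2 ^ (erased H E).rank * 2 ^ Module.finrank (ZMod 2)
          ((LinearMap.ker (erased H Eᶜ).vecMulLinear).map H.vecMulLinear) := by
        apply Nat.mul_le_mul
        · rw [card_submodule]
          exact le_of_eq (by rw [Matrix.rank])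
        · exact card_inter_le H E

lemma card_err_eq {r n : ℕ} (H : Matrix (Fin r) (Fin n × Fin 2) (ZMod 2))
    (D : Finset (Fin n) → (Fin r → ZMod 2) → ((Fin n × Fin 2 → ZMod 2) ⧸ rowSpace H))
    (E : Finset (Fin n)) :
    Nat.card {w : Fin n × Fin 2 → ZMod 2 |
        psupp w ⊆ E ∧ D E (syndrome H w) ≠ Submodule.Quotient.mk w}
      = 4 ^ E.card - Nat.card {w : Fin n × Fin 2 → ZMod 2 |
        psupp w ⊆ E ∧ D E (syndrome H w) = Submodule.Quotient.mk w} := by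
  classical
  rw [← card_supp_subset E]
  have hdiff : {w : Fin n × Fin 2 → ZMod 2 |
        psupp w ⊆ E ∧ D E (syndrome H w) ≠ Submodule.Quotient.mk w}
      = {w : Fin n × Fin 2 → ZMod 2 | psupp w ⊆ E} \
        {w : Fin n × Fin 2 → ZMod 2 |
          psupp w ⊆ E ∧ D E (syndrome H w) = Submodule.Quotient.mk w} := by
    ext w
    simp only [Set.mem_diff, Set.mem_setOf_eq]
    tauto
  rw [hdiff, Nat.card_coe_set_eq, Nat.card_coe_set_eq, Nat.card_coe_set_eq,
    Set.ncard_diff (fun w hw => hw.1) (Set.toFinite _)]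

lemma arith_key (n k rH rE rEc a cC cErr : ℕ) (hn : 1 ≤ n) (hk : k ≤ n)
    (ha : a + rEc = rH) (h1 : cC ≤ 2 ^ rE * 2 ^ a) (h2 : cC ≤ 4 ^ k)
    (h3 : cErr = 4 ^ k - cC) :
    (2 * (k : ℝ) - (rH : ℝ) + ((rEc : ℝ) - (rE : ℝ)) - 1) / (2 * (n : ℝ))
      ≤ (cErr : ℝ) / 4 ^ k := by
  have hN : (0 : ℝ) < 2 * n := by
    have : (1 : ℝ) ≤ n := by exact_mod_cast hn
    linarith
  have hF : (0 : ℝ) < 4 ^ k := by positivity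
  have hcErr : (cErr : ℝ) = 4 ^ k - cC := by
    rw [h3]
    push_cast [Nat.cast_sub h2]
    ring
  have hrH : (rH : ℝ) = a + rEc := by exact_mod_cast ha.symm
  by_cases hcase : 2 * k ≤ a + rE
  · apply le_trans (b := (0 : ℝ))
    · apply div_nonpos_of_nonpos_of_nonneg
      · have hcast : 2 * (k : ℝ) ≤ (a : ℝ) + rE := by exact_mod_cast hcase
        rw [hrH]
        linarith
      · linarith
    · apply div_nonneg _ hF.le
      positivity
  · push_neg at hcase
    set t := 2 * k - (a + rE) with ht
    have ht1 : 1 ≤ t := by omega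
    have ht2 : t + (a + rE) = 2 * k := by omega
    have ht3 : t ≤ 2 * n := by omega
    have htR : (t : ℝ) = 2 * k - a - rE := by
      rw [ht]
      push_cast [Nat.cast_sub (le_of_lt hcase)]
      ring
    have hpow : cC * 2 ^ t ≤ 4 ^ k := by
      calc cC * 2 ^ t ≤ (2 ^ rE * 2 ^ a) * 2 ^ t := Nat.mul_le_mul_right _ h1
        _ = 2 ^ (rE + a + t) := by rw [← pow_add, ← pow_add]
        _ = 4 ^ k := by
            rw [show (4 : ℕ) = 2 ^ 2 from rfl, ← pow_mul]
            congr 1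
            omega
    have hkey : 2 * n + 1 ≤ (2 * n + 1 - t) * 2 ^ t := by
      have h2t : t + 1 ≤ 2 ^ t := Nat.lt_two_pow_self
      calc 2 * n + 1 = (2 * n - t) + t + 1 := by omega
        _ ≤ (2 * n - t) * t + ((2 * n - t) + t + 1) := Nat.le_add_left _ _
        _ = ((2 * n - t) + 1) * (t + 1) := by ring
        _ = (2 * n + 1 - t) * (t + 1) := by congr 1; omega
        _ ≤ (2 * n + 1 - t) * 2 ^ t := Nat.mul_le_mul_left _ h2t
    have hpowR : (cC : ℝ) * 2 ^ t ≤ 4 ^ k := by exact_mod_cast hpow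
    have hkeyR : 2 * (n : ℝ) + 1 ≤ (2 * n + 1 - t) * 2 ^ t := by
      have := hkey
      have hc : ((2 * n + 1 - t : ℕ) : ℝ) = 2 * n + 1 - t := by
        push_cast [Nat.cast_sub (by omega : t ≤ 2 * n + 1)]
        ring
      calc 2 * (n : ℝ) + 1 = ((2 * n + 1 : ℕ) : ℝ) := by push_cast; ring
        _ ≤ ((2 * n + 1 - t) * 2 ^ t : ℕ) := by exact_mod_cast this
        _ = (2 * (n : ℝ) + 1 - t) * 2 ^ t := by push_cast [Nat.cast_sub (by omega : t ≤ 2 * n + 1)]; ring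
    have hA : (0 : ℝ) < 2 ^ t := by positivity
    rw [hcErr, hrH, div_le_div_iff₀ hN hF]
    have hnum : 2 * (k : ℝ) - ((a : ℝ) + rEc) + ((rEc : ℝ) - rE) - 1 = (t : ℝ) - 1 := by
      rw [htR]; ring
    rw [hnum]
    have hs : ((t : ℝ) - 1) * 4 ^ k * 2 ^ t ≤ (4 ^ k - cC) * (2 * n) * 2 ^ t := by
      have k1 : (2 * (n : ℝ) + 1) * 4 ^ k ≤ ((2 * n + 1 - t) * 2 ^ t) * 4 ^ k :=
        mul_le_mul_of_nonneg_right hkeyR hF.le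
      have k2 : (cC : ℝ) * 2 ^ t * (2 * n) ≤ 4 ^ k * (2 * n) :=
        mul_le_mul_of_nonneg_right hpowR hN.le
      nlinarith [hF, hA]
    exact le_of_mul_le_mul_right hs hA

theorem fano_lower_bound_on_decoding_error_probability
    {r n : ℕ} (hn : 1 ≤ n) (H : Matrix (Fin r) (Fin n × Fin 2) (ZMod 2))
    (hH : IsStabilizerMatrix H) (p : ℝ) (hp : p ∈ Set.Icc (0 : ℝ) 1)
    (D : Finset (Fin n) → (Fin r → ZMod 2) → ((Fin n × Fin 2 → ZMod 2) ⧸ rowSpace H)) :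
    (2 * n * p - (H.rank : ℝ) + rankDiffExp H p - 1) / (2 * n) ≤ errProb H p D := by
  obtain ⟨hp0, hp1⟩ := hp
  have hw_nonneg : ∀ E : Finset (Fin n), 0 ≤ p ^ E.card * (1 - p) ^ (n - E.card) :=
    fun E => mul_nonneg (pow_nonneg hp0 _) (pow_nonneg (by linarith) _)
  have hLHS : (2 * n * p - (H.rank : ℝ) + rankDiffExp H p - 1) / (2 * n)
      = ∑ E : Finset (Fin n), p ^ E.card * (1 - p) ^ (n - E.card) *
          ((2 * (E.card : ℝ) - (H.rank : ℝ) +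
            (((erased H Eᶜ).rank : ℝ) - ((erased H E).rank : ℝ)) - 1) / (2 * (n : ℝ))) := by
    have hterm : ∀ E : Finset (Fin n),
        p ^ E.card * (1 - p) ^ (n - E.card) *
          ((2 * (E.card : ℝ) - (H.rank : ℝ) +
            (((erased H Eᶜ).rank : ℝ) - ((erased H E).rank : ℝ)) - 1) / (2 * (n : ℝ)))
        = (2 * (p ^ E.card * (1 - p) ^ (n - E.card) * (E.card : ℝ))
            + p ^ E.card * (1 - p) ^ (n - E.card) *
              (((erased H Eᶜ).rank : ℝ) - ((erased H E).rank : ℝ))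
            - ((H.rank : ℝ) + 1) * (p ^ E.card * (1 - p) ^ (n - E.card))) / (2 * (n : ℝ)) := by
      intro E; ring
    rw [Finset.sum_congr rfl fun E _ => hterm E, ← Finset.sum_div]
    congr 1
    rw [Finset.sum_sub_distrib, Finset.sum_add_distrib, ← Finset.mul_sum, ← Finset.mul_sum,
      sum_weights_mul_card, sum_weights_univ]
    simp only [rankDiffExp]
    ring
  rw [hLHS]
  simp only [errProb]
  apply Finset.sum_le_sum
  intro E _
  apply mul_le_mul_of_nonneg_left _ (hw_nonneg E)
  have hk : E.card ≤ n := by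
    simpa using Finset.card_le_card (Finset.subset_univ E)
  have h2 : Nat.card {w : Fin n × Fin 2 → ZMod 2 |
      psupp w ⊆ E ∧ D E (syndrome H w) = Submodule.Quotient.mk w} ≤ 4 ^ E.card := by
    rw [← card_supp_subset E]
    exact Nat.card_mono (Set.toFinite _) fun w hw => hw.1
  exact arith_key n E.card H.rank (erased H E).rank (erased H Eᶜ).rank
    (Module.finrank (ZMod 2) ((LinearMap.ker (erased H Eᶜ).vecMulLinear).map H.vecMulLinear))
    _ _ hn hk (finrank_inter H E) (card_correct_le H D E) h2 (card_err_eq H D E)
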